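/- If X is a compact connected metric space with span zero (i.e., every subcontinuum Z of X × X with π₁(Z) ⊆ π₂(Z) meets the diagonal), then for every ε > 0 there exists δ > 0 such that: for every graph G and arc I (with endpoints p, q) embedded in the Hilbert cube whose Hausdorff distance to X is less than δ, the set M = {(x,y) ∈ G × (I \ {p,q}) : d(x,y) < ε} separates G × {p} from G × {q} in G × I. -/

import Mathlib

open Set Topology

/-- A subset of a space is *regular* if it is closed and has finitely many connected
components, each of which is non-degenerate. -/
def IsRegularSet {G : Type*} [TopologicalSpace G] (A : Set G) : Prop :=
  IsClosed A ∧ {C : Set G | ∃ x ∈ A, C = connectedComponentIn A x}.Finite ∧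
    ∀ x ∈ A, (connectedComponentIn A x).Nontrivial

/-- A point of a graph is *ordinary* (neither a branch point nor an endpoint) if it has an
open neighborhood homeomorphic to an open interval. -/
def IsOrdinaryPoint {G : Type*} [TopologicalSpace G] (x : G) : Prop :=
  ∃ U : Set G, IsOpen U ∧ x ∈ U ∧ Nonempty (U ≃ₜ Set.Ioo (0 : ℝ) 1)

/-- A topological space is a *graph* if it is a finite union of arcs which intersect
at most in endpoints. -/
def IsGraphSpace (G : Type*) [TopologicalSpace G] : Prop :=
  ∃ (n : ℕ) (f : Fin n → unitInterval → G),
    (∀ i, Continuous (f i) ∧ Function.Injective (f i)) ∧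
    (⋃ i, Set.range (f i)) = Set.univ ∧
    ∀ i j, i ≠ j →
      Set.range (f i) ∩ Set.range (f j) ⊆ ({f i 0, f i 1} : Set G) ∩ {f j 0, f j 1}

/-- A subset of a space is a *graph* if it is a finite union of arcs which intersect
at most in endpoints. -/
def IsGraphSet {E : Type*} [TopologicalSpace E] (G : Set E) : Prop :=
  ∃ (n : ℕ) (f : Fin n → unitInterval → E),
    (∀ i, Continuous (f i) ∧ Function.Injective (f i)) ∧
    G = ⋃ i, Set.range (f i) ∧
    ∀ i j, i ≠ j →
      Set.range (f i) ∩ Set.range (f j) ⊆ ({f i 0, f i 1} : Set E) ∩ {f j 0, f j 1}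

/-- `φ` restricted to `A` is a homeomorphism onto `B`. -/
def MapsHomeoOnto {F G : Type*} [TopologicalSpace F] [TopologicalSpace G]
    (φ : F → G) (A : Set F) (B : Set G) : Prop :=
  φ '' A = B ∧ Topology.IsEmbedding (A.restrict φ)

/-- A *simple fold* on `G`, with pieces `F1, F2, F3` of `F` and projection `φ : F → G`,
satisfying properties (F1)-(F5). -/
def IsSimpleFold {F G : Type*} [TopologicalSpace F] [TopologicalSpace G]
    (φ : F → G) (F1 F2 F3 : Set F) : Prop :=
  Continuous φ ∧ F1 ∪ F2 ∪ F3 = Set.univ ∧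
  -- (F1)
  ((φ '' F1).Nonempty ∧ (φ '' F2).Nonempty ∧ (φ '' F3).Nonempty) ∧
  (IsRegularSet (φ '' F1) ∧ IsRegularSet (φ '' F2) ∧ IsRegularSet (φ '' F3)) ∧
  -- (F2)
  (φ '' F1) ∪ (φ '' F3) = Set.univ ∧ (φ '' F2) = (φ '' F1) ∩ (φ '' F3) ∧
  -- (F3)
  closure ((φ '' F1) \ (φ '' F2)) ∩ closure ((φ '' F3) \ (φ '' F2)) = ∅ ∧
  -- (F4)
  (MapsHomeoOnto φ F1 (φ '' F1) ∧ MapsHomeoOnto φ F2 (φ '' F2) ∧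
    MapsHomeoOnto φ F3 (φ '' F3)) ∧
  -- (F5)
  frontier (φ '' F1) = φ '' (F1 ∩ F2) ∧ frontier (φ '' F3) = φ '' (F2 ∩ F3) ∧
  F1 ∩ F3 = ∅

/-- `S` separates `A` from `B` within `Y`: the complement `Y \ S` is the union of two
disjoint sets, relatively open in `Y \ S`, containing `A` and `B` respectively. -/
def SeparatesWithin {E : Type*} [TopologicalSpace E] (Y S A B : Set E) : Prop :=
  ∃ U V : Set E,
    U ∪ V = Y \ S ∧ U ∩ V = ∅ ∧ A ⊆ U ∧ B ⊆ V ∧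
    (∃ U', IsOpen U' ∧ U = (Y \ S) ∩ U') ∧ (∃ V', IsOpen V' ∧ V = (Y \ S) ∩ V')

/-- `A` has *consistent complement relative to* `B`: for each component `C` of the
complement of `A`, either `∂C ⊆ B` or `∂C ∩ B = ∅`. -/
def ConsistentComplement {G : Type*} [TopologicalSpace G] (A B : Set G) : Prop :=
  ∀ x ∉ A, frontier (connectedComponentIn Aᶜ x) ⊆ B ∨
    frontier (connectedComponentIn Aᶜ x) ∩ B = ∅

/-- The *`A` side of `B`*, `σ_B(A)`: the closure of the union of all components of
`G \ B` meeting `A`. -/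
def sideOf {G : Type*} [TopologicalSpace G] (B A : Set G) : Set G :=
  closure (⋃ x ∈ {x : G | x ∉ B ∧ (connectedComponentIn Bᶜ x ∩ A).Nonempty},
    connectedComponentIn Bᶜ x)

/-- A subset of `G × [0,1]` is *straight* if it is closed, the projection is injective on
it, and its projection is regular. -/
def IsStraight {G : Type*} [TopologicalSpace G] (S : Set (G × unitInterval)) : Prop :=
  IsClosed S ∧ Set.InjOn Prod.fst S ∧ IsRegularSet (Prod.fst '' S)

/-- The *end set* of a straight set. -/
def endSet {G : Type*} [TopologicalSpace G] (S : Set (G × unitInterval)) :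
    Set (G × unitInterval) :=
  S ∩ Prod.fst ⁻¹' (frontier (Prod.fst '' S))

/-- A *stairwell structure* of height `k` for `S ⊆ G × [0,1]`, given by the pieces
`Sp 1, …, Sp k` with end set decompositions `E(Sp i) = α i ∪ β i`. -/
def IsStairwell {G : Type*} [TopologicalSpace G]
    (Sp α β : ℕ → Set (G × unitInterval)) (k : ℕ) (S : Set (G × unitInterval)) : Prop :=
  1 ≤ k ∧
  -- (S1)
  (∀ i ∈ Set.Icc 1 k, (Sp i).Nonempty ∧ IsStraight (Sp i)) ∧
  S = ⋃ i ∈ Set.Icc 1 k, Sp i ∧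
  -- (S2)
  (∀ i ∈ Set.Icc 1 k, endSet (Sp i) = α i ∪ β i ∧ α i ∩ β i = ∅ ∧
    (α i).Finite ∧ (β i).Finite) ∧
  α 1 = ∅ ∧ β k = ∅ ∧ (∀ i, 1 ≤ i → i < k → β i = α (i + 1)) ∧
  -- (S3)
  (∀ i, 1 ≤ i → i < k → ∃ V : Set G, IsOpen V ∧ Prod.fst '' β i ⊆ V ∧
    Prod.fst '' Sp i ∩ V = Prod.fst '' Sp (i + 1) ∩ V) ∧
  -- (S4)
  (∀ i ∈ Set.Icc 1 k, ConsistentComplement (Prod.fst '' Sp i) (Prod.fst '' α i) ∧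
    ConsistentComplement (Prod.fst '' Sp i) (Prod.fst '' β i)) ∧
  -- (S5)
  (∀ i ∈ Set.Icc 2 k, ∀ p ∈ α i, IsOrdinaryPoint p.1) ∧
  (∀ i j, 2 ≤ i → i < j → j ≤ k → Prod.fst '' α i ∩ Prod.fst '' α j = ∅)

/-- A *broken stairwell structure* of height `k` with a pit at level `i0`. -/
def IsBrokenStairwell {G : Type*} [TopologicalSpace G]
    (Sp α β : ℕ → Set (G × unitInterval)) (γ P1 P2 : Set (G × unitInterval))
    (k i0 : ℕ) (S : Set (G × unitInterval)) : Prop :=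
  1 ≤ k ∧ 1 ≤ i0 ∧ i0 ≤ k ∧
  -- (S1')
  (∀ i ∈ Set.Icc 1 k, (Sp i).Nonempty ∧ IsStraight (Sp i)) ∧
  P1.Nonempty ∧ IsStraight P1 ∧ P2.Nonempty ∧ IsStraight P2 ∧
  S = (⋃ i ∈ Set.Icc 1 k, Sp i) ∪ P1 ∪ P2 ∧
  -- (S2')
  (∀ i ∈ Set.Icc 1 k, i ≠ i0 → endSet (Sp i) = α i ∪ β i) ∧
  endSet (Sp i0) = α i0 ∪ β i0 ∪ γ ∧
  (∀ i ∈ Set.Icc 1 k, α i ∩ β i = ∅ ∧ (α i).Finite ∧ (β i).Finite) ∧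
  γ.Finite ∧ α i0 ∩ γ = ∅ ∧ β i0 ∩ γ = ∅ ∧
  α 1 = ∅ ∧ β k = ∅ ∧ (∀ i, 1 ≤ i → i < k → β i = α (i + 1)) ∧
  endSet P2 = endSet P1 ∪ γ ∧ endSet P1 ∩ γ = ∅ ∧
  -- (S3')
  (∀ i, 1 ≤ i → i < k → ∃ V : Set G, IsOpen V ∧ Prod.fst '' β i ⊆ V ∧
    Prod.fst '' Sp i ∩ V = Prod.fst '' Sp (i + 1) ∩ V) ∧
  (∃ V : Set G, IsOpen V ∧ Prod.fst '' endSet P1 ⊆ V ∧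
    Prod.fst '' P1 ∩ V = Prod.fst '' P2 ∩ V) ∧
  (∃ W : Set G, IsOpen W ∧ Prod.fst '' γ ⊆ W ∧
    Prod.fst '' P2 ∩ W = Prod.fst '' Sp i0 ∩ W) ∧
  -- (S4')
  (∀ i ∈ Set.Icc 1 k, ConsistentComplement (Prod.fst '' Sp i) (Prod.fst '' α i) ∧
    ConsistentComplement (Prod.fst '' Sp i) (Prod.fst '' β i)) ∧
  ConsistentComplement (Prod.fst '' Sp i0) (Prod.fst '' γ) ∧
  ConsistentComplement (Prod.fst '' P2) (Prod.fst '' endSet P1) ∧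
  ConsistentComplement (Prod.fst '' P2) (Prod.fst '' γ) ∧
  -- (S5')
  (∀ i ∈ Set.Icc 2 k, ∀ p ∈ α i, IsOrdinaryPoint p.1) ∧
  (∀ p ∈ endSet P1, IsOrdinaryPoint p.1) ∧ (∀ p ∈ γ, IsOrdinaryPoint p.1) ∧
  (∀ i j, 2 ≤ i → i < j → j ≤ k → Prod.fst '' α i ∩ Prod.fst '' α j = ∅) ∧
  (∀ i ∈ Set.Icc 2 k, Prod.fst '' α i ∩ Prod.fst '' endSet P1 = ∅ ∧
    Prod.fst '' α i ∩ Prod.fst '' γ = ∅) ∧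
  Prod.fst '' endSet P1 ∩ Prod.fst '' γ = ∅ ∧
  -- (S6')
  Prod.fst '' α i0 ∩ Prod.fst '' (P1 ∪ P2) = ∅

/-- A compactum is *hereditarily indecomposable* if every non-degenerate subcontinuum is
indecomposable, i.e. is not the union of two proper subcontinua. -/
def HereditarilyIndecomposable (X : Type*) [TopologicalSpace X] : Prop :=
  ∀ K : Set X, IsCompact K → IsConnected K → K.Nontrivial →
    ¬ ∃ A B : Set X, IsCompact A ∧ IsConnected A ∧ IsCompact B ∧ IsConnected B ∧
      A ∪ B = K ∧ A ≠ K ∧ B ≠ K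

/-- A continuum is *arc-like* if for every `ε > 0` it admits an `ε`-map onto `[0,1]`. -/
def ArcLike (X : Type*) [MetricSpace X] : Prop :=
  ∀ ε > (0 : ℝ), ∃ f : X → unitInterval, Continuous f ∧ Function.Surjective f ∧
    ∀ y, Metric.diam (f ⁻¹' {y}) < ε

/-- A continuum has *span zero* if every subcontinuum `Z ⊆ X × X` with
`π₁(Z) ⊆ π₂(Z)` meets the diagonal. -/
def SpanZero (X : Type*) [TopologicalSpace X] : Prop :=
  ∀ Z : Set (X × X), IsCompact Z → IsConnected Z →
    Prod.fst '' Z ⊆ Prod.snd '' Z → ∃ x, (x, x) ∈ Z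

open Metric


section Aux

variable {α : Type*} {E : Type*}

/-- In a compact T2 space, if no connected component of a point of the closed set `A`
meets the closed set `B`, then there is a clopen set containing `A` and disjoint from `B`. -/
theorem aux_wirecut_space [TopologicalSpace α] [CompactSpace α] [T2Space α]
    {A B : Set α} (hA : IsClosed A) (hB : IsClosed B)
    (h : ∀ x ∈ A, connectedComponent x ∩ B = ∅) :
    ∃ P : Set α, IsClopen P ∧ A ⊆ P ∧ P ∩ B = ∅ := by
  have step1 : ∀ x : α, x ∈ A → ∃ P : Set α, IsClopen P ∧ x ∈ P ∧ P ∩ B = ∅ := by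
    intro x hx
    have hBc : IsCompact B := hB.isCompact
    have hcover : B ⊆ ⋃ s : { s : Set α // IsClopen s ∧ x ∈ s }, (↑s : Set α)ᶜ := by
      intro b hb
      by_contra hb'
      simp only [mem_iUnion, mem_compl_iff, not_exists, not_not] at hb'
      have hbc : b ∈ connectedComponent x ∩ B := by
        refine ⟨?_, hb⟩
        rw [connectedComponent_eq_iInter_isClopen x, mem_iInter]
        exact fun s => hb' s
      rw [h x hx] at hbc
      exact hbc
    obtain ⟨F, hF⟩ := hBc.elim_finite_subcover
      (fun s : { s : Set α // IsClopen s ∧ x ∈ s } => (↑s : Set α)ᶜ)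
      (fun s => s.2.1.isClosed.isOpen_compl) hcover
    refine ⟨⋂ s ∈ F, (↑s : Set α), ?_, ?_, ?_⟩
    · exact F.finite_toSet.isClopen_biInter (fun s _ => s.2.1)
    · exact mem_iInter₂.2 fun s _ => s.2.2
    · ext b
      simp only [mem_inter_iff, mem_iInter, mem_empty_iff_false, iff_false, not_and]
      intro hmem hb
      obtain ⟨s, hsF, hbs⟩ := mem_iUnion₂.1 (hF hb)
      exact hbs (hmem s hsF)
  choose! P hP1 hP2 hP3 using step1
  have hcover : A ⊆ ⋃ x : A, P x := fun a ha =>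
    mem_iUnion.2 ⟨⟨a, ha⟩, hP2 a ha⟩
  obtain ⟨F, hF⟩ := hA.isCompact.elim_finite_subcover (fun x : A => P x)
    (fun x => (hP1 x x.2).isOpen) hcover
  refine ⟨⋃ x ∈ F, P x, ?_, ?_, ?_⟩
  · exact F.finite_toSet.isClopen_biUnion (fun x _ => hP1 x x.2)
  · intro a ha
    obtain ⟨x, hxF, hax⟩ := mem_iUnion₂.1 (hF ha)
    exact mem_iUnion₂.2 ⟨x, hxF, hax⟩
  · ext b
    simp only [mem_inter_iff, mem_iUnion, mem_empty_iff_false, iff_false, not_and]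
    rintro ⟨x, hxF, hbx⟩ hb
    have := hP3 x x.2
    rw [eq_empty_iff_forall_notMem] at this
    exact this b ⟨hbx, hb⟩

/-- Connected components of compact sets are compact. -/
theorem aux_isCompact_connectedComponentIn [TopologicalSpace α] {K : Set α}
    (hK : IsCompact K) (x : α) : IsCompact (connectedComponentIn K x) := by
  by_cases hx : x ∈ K
  · rw [connectedComponentIn_eq_image hx]
    haveI : CompactSpace K := isCompact_iff_compactSpace.mp hK
    exact (isClosed_connectedComponent.isCompact).image continuous_subtype_val
  · rw [connectedComponentIn_eq_empty hx]; exact isCompact_empty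

/-- Wire-cutting: either some component of a compact set `K` joins `A` to `B`, or
`K` splits into disjoint compacta separating `A` from `B`. -/
theorem aux_wirecut_set [TopologicalSpace α] [T2Space α] {K A B : Set α}
    (hK : IsCompact K) (hA : IsClosed A) (hB : IsClosed B) (hAK : A ⊆ K) (hBK : B ⊆ K) :
    (∃ x ∈ A, (connectedComponentIn K x ∩ B).Nonempty) ∨
    (∃ P Q : Set α, IsCompact P ∧ IsCompact Q ∧ P ∪ Q = K ∧ P ∩ Q = ∅ ∧ A ⊆ P ∧ B ⊆ Q) := by
  by_cases hc : ∃ x ∈ A, (connectedComponentIn K x ∩ B).Nonempty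
  · exact Or.inl hc
  push_neg at hc
  right
  haveI : CompactSpace K := isCompact_iff_compactSpace.mp hK
  set A' : Set K := Subtype.val ⁻¹' A with hA'def
  set B' : Set K := Subtype.val ⁻¹' B with hB'def
  have h : ∀ x' ∈ A', connectedComponent x' ∩ B' = ∅ := by
    rintro ⟨x, hxK⟩ hx'
    have hxA : x ∈ A := hx'
    rw [eq_empty_iff_forall_notMem]
    rintro z' ⟨hz1, hz2⟩
    have : (z' : α) ∈ connectedComponentIn K x ∩ B := by
      refine ⟨?_, hz2⟩
      rw [connectedComponentIn_eq_image hxK]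
      exact mem_image_of_mem _ hz1
    have h2 := hc x hxA
    rw [h2] at this
    exact this
  obtain ⟨P', hP'clopen, hA'P', hP'B'⟩ := aux_wirecut_space
    (hA.preimage continuous_subtype_val) (hB.preimage continuous_subtype_val) h
  refine ⟨Subtype.val '' P', Subtype.val '' P'ᶜ, ?_, ?_, ?_, ?_, ?_, ?_⟩
  · exact hP'clopen.isClosed.isCompact.image continuous_subtype_val
  · exact hP'clopen.compl.isClosed.isCompact.image continuous_subtype_val
  · rw [← image_union, union_compl_self, image_univ, Subtype.range_coe]
  · rw [← image_inter Subtype.coe_injective, inter_compl_self, image_empty]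
  · intro a ha
    exact ⟨⟨a, hAK ha⟩, hA'P' ha, rfl⟩
  · intro b hb
    refine ⟨⟨b, hBK hb⟩, ?_, rfl⟩
    intro hmem
    rw [eq_empty_iff_forall_notMem] at hP'B'
    exact hP'B' ⟨b, hBK hb⟩ ⟨hmem, hb⟩

/-- The Hausdorff limit of compact connected sets is connected. -/
theorem aux_preconn_limit [MetricSpace α] {K : ℕ → Set α} {C : Set α}
    (hKc : ∀ n, IsCompact (K n)) (hKne : ∀ n, (K n).Nonempty)
    (hKconn : ∀ n, IsPreconnected (K n)) (hCc : IsCompact C) (hCne : C.Nonempty)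
    (hfin : ∀ n, EMetric.hausdorffEdist (K n) C ≠ ⊤)
    (hlim : ∀ r > (0:ℝ), ∃ n, hausdorffDist (K n) C < r) :
    IsPreconnected C := by
  by_contra hnc
  rw [IsPreconnected] at hnc
  push_neg at hnc
  obtain ⟨u, v, hu, hv, hcover, hCu, hCv, hempty⟩ := hnc
  set A : Set α := C \ v with hAdef
  set B : Set α := C \ u with hBdef
  have hAc : IsCompact A := hCc.diff hv
  have hBc : IsCompact B := hCc.diff hu
  have hABeq : A ∪ B = C := by
    apply Subset.antisymm (union_subset diff_subset diff_subset)
    intro z hz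
    by_cases hzv : z ∈ v
    · right; refine ⟨hz, fun hzu => ?_⟩
      have : z ∈ C ∩ (u ∩ v) := ⟨hz, hzu, hzv⟩
      rw [hempty] at this; exact this
    · exact Or.inl ⟨hz, hzv⟩
  have hAne : A.Nonempty := by
    obtain ⟨z, hzC, hzu⟩ := hCu
    refine ⟨z, hzC, fun hzv => ?_⟩
    have : z ∈ C ∩ (u ∩ v) := ⟨hzC, hzu, hzv⟩
    rw [hempty] at this; exact this
  have hBne : B.Nonempty := by
    obtain ⟨z, hzC, hzv⟩ := hCv
    refine ⟨z, hzC, fun hzu => ?_⟩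
    have : z ∈ C ∩ (u ∩ v) := ⟨hzC, hzu, hzv⟩
    rw [hempty] at this; exact this
  have hd : Disjoint A B := by
    rw [disjoint_iff_inter_eq_empty, eq_empty_iff_forall_notMem]
    rintro z ⟨⟨hzC, hzv⟩, ⟨-, hzu⟩⟩
    rcases hcover hzC with h | h
    exacts [hzu h, hzv h]
  obtain ⟨δ, hδ, hthick⟩ := hd.exists_thickenings hAc hBc.isClosed
  obtain ⟨N, hN⟩ := hlim δ hδ
  have hfinN := hfin N
  have hsub : K N ⊆ thickening δ A ∪ thickening δ B := by
    intro y hy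
    have h1 : infDist y C < δ :=
      lt_of_le_of_lt (infDist_le_hausdorffDist_of_mem hy hfinN) hN
    obtain ⟨c, hcC, hyc⟩ := (infDist_lt_iff hCne).1 h1
    rw [← hABeq] at hcC
    rcases hcC with h | h
    · exact Or.inl (mem_thickening_iff.2 ⟨c, h, hyc⟩)
    · exact Or.inr (mem_thickening_iff.2 ⟨c, h, hyc⟩)
  have hfinN' : EMetric.hausdorffEdist C (K N) ≠ ⊤ := by
    convert hfinN using 1; exact EMetric.hausdorffEdist_comm
  have key : ∀ z ∈ C, (K N ∩ thickening δ {z}).Nonempty := by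
    intro z hz
    have h1 : infDist z (K N) < δ := by
      calc infDist z (K N) ≤ hausdorffDist C (K N) :=
            infDist_le_hausdorffDist_of_mem hz hfinN'
        _ = hausdorffDist (K N) C := hausdorffDist_comm
        _ < δ := hN
    obtain ⟨y, hyK, hzy⟩ := (infDist_lt_iff (hKne N)).1 h1
    exact ⟨y, hyK, mem_thickening_iff.2 ⟨z, rfl, by rwa [dist_comm]⟩⟩
  have hne1 : (K N ∩ thickening δ A).Nonempty := by
    obtain ⟨a, ha⟩ := hAne
    obtain ⟨y, hyK, hyt⟩ := key a ha.1
    obtain ⟨z, hz, hd2⟩ := mem_thickening_iff.1 hyt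
    cases hz
    exact ⟨y, hyK, mem_thickening_iff.2 ⟨a, ha, hd2⟩⟩
  have hne2 : (K N ∩ thickening δ B).Nonempty := by
    obtain ⟨a, ha⟩ := hBne
    obtain ⟨y, hyK, hyt⟩ := key a ha.1
    obtain ⟨z, hz, hd2⟩ := mem_thickening_iff.1 hyt
    cases hz
    exact ⟨y, hyK, mem_thickening_iff.2 ⟨a, ha, hd2⟩⟩
  obtain ⟨z, -, hz1, hz2⟩ := hKconn N _ _ isOpen_thickening isOpen_thickening hsub hne1 hne2
  exact Set.disjoint_left.mp hthick hz1 hz2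

/-- Projections do not increase Hausdorff distance (for a 1-Lipschitz map). -/
theorem aux_hausdorffDist_image_le [MetricSpace α] [MetricSpace E] {f : α → E}
    (hf : ∀ p q : α, dist (f p) (f q) ≤ dist p q) {s t : Set α}
    (hs : IsCompact s) (ht : IsCompact t) (hsne : s.Nonempty) (htne : t.Nonempty)
    (hfin : EMetric.hausdorffEdist s t ≠ ⊤) :
    hausdorffDist (f '' s) (f '' t) ≤ hausdorffDist s t := by
  apply hausdorffDist_le_of_mem_dist hausdorffDist_nonneg
  · rintro x ⟨p, hp, rfl⟩
    obtain ⟨q, hq, hpq⟩ := ht.exists_infDist_eq_dist htne p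
    refine ⟨f q, mem_image_of_mem _ hq, ?_⟩
    calc dist (f p) (f q) ≤ dist p q := hf p q
      _ = infDist p t := hpq.symm
      _ ≤ hausdorffDist s t := infDist_le_hausdorffDist_of_mem hp hfin
  · rintro x ⟨q, hq, rfl⟩
    obtain ⟨p, hp, hpq⟩ := hs.exists_infDist_eq_dist hsne q
    refine ⟨f p, mem_image_of_mem _ hp, ?_⟩
    calc dist (f q) (f p) ≤ dist q p := hf q p
      _ = infDist q s := hpq.symm
      _ ≤ hausdorffDist t s := infDist_le_hausdorffDist_of_mem hq
            (by convert hfin using 1; exact EMetric.hausdorffEdist_comm)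
      _ = hausdorffDist s t := hausdorffDist_comm

/-- A preconnected subset of an arc containing the images of `a` and `b` contains the
image of everything between. -/
theorem aux_arc_subset [MetricSpace E] {γ : unitInterval → E}
    (hγc : Continuous γ) (hγi : Function.Injective γ) {S : Set E}
    (hS : IsPreconnected S) (hSr : S ⊆ range γ) {a b : unitInterval}
    (ha : γ a ∈ S) (hb : γ b ∈ S) {s : unitInterval} (has : a ≤ s) (hsb : s ≤ b) :
    γ s ∈ S := by
  have hemb : Topology.IsEmbedding γ := (hγc.isClosedEmbedding hγi).toIsEmbedding
  set T : Set unitInterval := γ ⁻¹' S with hT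
  have himg : γ '' T = S := image_preimage_eq_of_subset hSr
  have hTpre : IsPreconnected T := by
    have h2 := hemb.toIsInducing.isPreconnected_image (s := T)
    rw [himg] at h2
    exact h2.1 hS
  have hTval : IsPreconnected (Subtype.val '' T) :=
    hTpre.image _ continuous_subtype_val.continuousOn
  have haT : (a : ℝ) ∈ Subtype.val '' T := mem_image_of_mem _ (mem_preimage.2 ha)
  have hbT : (b : ℝ) ∈ Subtype.val '' T := mem_image_of_mem _ (mem_preimage.2 hb)
  have hsmem : (s : ℝ) ∈ Set.Icc (a : ℝ) (b : ℝ) :=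
    ⟨Subtype.coe_le_coe.2 has, Subtype.coe_le_coe.2 hsb⟩
  obtain ⟨u, huT, huv⟩ := hTval.Icc_subset haT hbT hsmem
  have hus : u = s := Subtype.ext huv
  rw [hus] at huT
  exact huT

end Aux

section Construct


theorem aux_construct {E : Type*} [MetricSpace E] {G I : Set E}
    {γ : unitInterval → E} {ε δ : ℝ} (hε : 0 < ε) (hδ : 0 < δ)
    (hGc : IsCompact G) (hγc : Continuous γ) (hγi : Function.Injective γ)
    (hIdef : Set.range γ = I)
    (hnsep : ¬ SeparatesWithin (G ×ˢ I)
        {p : E × E | p.1 ∈ G ∧ p.2 ∈ I \ {γ 0, γ 1} ∧ dist p.1 p.2 < ε}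
        (G ×ˢ {γ 0}) (G ×ˢ {γ 1})) :
    ∃ C : Set (E × E), IsCompact C ∧ C.Nonempty ∧ IsPreconnected C ∧
      (∀ z ∈ C, ε ≤ dist z.1 z.2) ∧
      (∀ z ∈ C, z.1 ∈ G ∧ z.2 ∈ I) ∧
      (∀ y ∈ I, ∃ z ∈ C, dist y z.2 < 2 * δ) := by
  have hIc : IsCompact I := hIdef ▸ isCompact_range hγc
  set S : Set (E × E) := {p : E × E | p.1 ∈ G ∧ p.2 ∈ I \ {γ 0, γ 1} ∧ dist p.1 p.2 < ε}
    with hSdef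
  set Y : Set (E × E) := G ×ˢ I with hYdef
  set O : Set (E × E) := {p : E × E | (p.2 ≠ γ 0 ∧ p.2 ≠ γ 1) ∧ dist p.1 p.2 < ε} with hOdef
  have hOopen : IsOpen O := by
    have h1 : IsOpen {p : E × E | p.2 ≠ γ 0} := isOpen_ne.preimage continuous_snd
    have h2 : IsOpen {p : E × E | p.2 ≠ γ 1} := isOpen_ne.preimage continuous_snd
    have h3 : IsOpen {p : E × E | dist p.1 p.2 < ε} :=
      isOpen_lt (continuous_fst.dist continuous_snd) continuous_const
    have heq : O = ({p : E × E | p.2 ≠ γ 0} ∩ {p : E × E | p.2 ≠ γ 1}) ∩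
        {p : E × E | dist p.1 p.2 < ε} := by
      ext p; simp only [hOdef, mem_setOf_eq, mem_inter_iff]
    rw [heq]; exact (h1.inter h2).inter h3
  have hSYO : S = Y ∩ O := by
    ext p
    simp only [hSdef, hYdef, hOdef, mem_setOf_eq, mem_inter_iff, mem_prod, mem_diff,
      mem_insert_iff, mem_singleton_iff]
    constructor
    · rintro ⟨h1, ⟨h2, h3⟩, h4⟩
      exact ⟨⟨h1, h2⟩, ⟨fun h => h3 (Or.inl h), fun h => h3 (Or.inr h)⟩, h4⟩
    · rintro ⟨⟨h1, h2⟩, ⟨h3, h4⟩, h5⟩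
      exact ⟨h1, ⟨h2, fun h => h.elim h3 h4⟩, h5⟩
  set K : Set (E × E) := Y \ O with hKdef
  have hYc : IsCompact Y := hGc.prod hIc
  have hKc : IsCompact K := hYc.diff hOopen
  have hYS : Y \ S = K := by rw [hSYO, diff_self_inter]
  have hγ0I : γ 0 ∈ I := hIdef ▸ mem_range_self 0
  have hγ1I : γ 1 ∈ I := hIdef ▸ mem_range_self 1
  have hAK : G ×ˢ ({γ 0} : Set E) ⊆ K := by
    intro p hp
    rw [mem_prod, mem_singleton_iff] at hp
    exact ⟨⟨hp.1, hp.2 ▸ hγ0I⟩, fun hO => hO.1.1 hp.2⟩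
  have hBK : G ×ˢ ({γ 1} : Set E) ⊆ K := by
    intro p hp
    rw [mem_prod, mem_singleton_iff] at hp
    exact ⟨⟨hp.1, hp.2 ▸ hγ1I⟩, fun hO => hO.1.2 hp.2⟩
  rcases aux_wirecut_set hKc (hGc.isClosed.prod isClosed_singleton)
      (hGc.isClosed.prod isClosed_singleton) hAK hBK with
    ⟨x, hxA, z0, hz0Z, hz0B⟩ | ⟨P, Q, hPc, hQc, hPQK, hPQd, hAP, hBQ⟩
  · -- a component `Z` of `K` joins the two end faces
    have hxK : x ∈ K := hAK hxA
    set Z : Set (E × E) := connectedComponentIn K x with hZdef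
    have hxZ : x ∈ Z := mem_connectedComponentIn hxK
    have hZK : Z ⊆ K := connectedComponentIn_subset K x
    have hZc : IsCompact Z := aux_isCompact_connectedComponentIn hKc x
    have hZpre : IsPreconnected Z := isPreconnected_connectedComponentIn
    obtain ⟨t1, ht1pos, ht1⟩ : ∃ t > (0:ℝ), ∀ s : unitInterval,
        dist s 0 < t → dist (γ s) (γ 0) < δ := by
      obtain ⟨t, ht, h⟩ := Metric.continuousAt_iff.1 (hγc.continuousAt (x := 0)) δ hδ
      exact ⟨t, ht, fun s hs => h hs⟩
    obtain ⟨t2, ht2pos, ht2⟩ : ∃ t > (0:ℝ), ∀ s : unitInterval,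
        dist s 1 < t → dist (γ s) (γ 1) < δ := by
      obtain ⟨t, ht, h⟩ := Metric.continuousAt_iff.1 (hγc.continuousAt (x := 1)) δ hδ
      exact ⟨t, ht, fun s hs => h hs⟩
    set θ : ℝ := min (min (t1 / 2) (t2 / 2)) (1 / 4) with hθdef
    have hθpos : 0 < θ := lt_min (lt_min (by linarith) (by linarith)) (by norm_num)
    have hθ14 : θ ≤ 1 / 4 := min_le_right _ _
    have hθt1 : θ < t1 :=
      lt_of_le_of_lt ((min_le_left _ _).trans (min_le_left _ _)) (by linarith)
    have hθt2 : θ < t2 :=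
      lt_of_le_of_lt ((min_le_left _ _).trans (min_le_right _ _)) (by linarith)
    set a : unitInterval := ⟨θ, ⟨le_of_lt hθpos, by linarith⟩⟩ with hadef
    set b : unitInterval := ⟨1 - θ, ⟨by linarith, by linarith⟩⟩ with hbdef
    have haR : (a : ℝ) = θ := rfl
    have hbR : (b : ℝ) = 1 - θ := rfl
    have hab : (a : ℝ) < (b : ℝ) := by rw [haR, hbR]; linarith
    have haleb : a ≤ b := Subtype.coe_le_coe.1 (le_of_lt hab)
    have hdista : dist a (0:unitInterval) = θ := by
      rw [Subtype.dist_eq]; simp [Real.dist_eq, haR, abs_of_nonneg (le_of_lt hθpos)]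
    have hdistb : dist b (1:unitInterval) = θ := by
      rw [Subtype.dist_eq, Real.dist_eq]
      simp only [Icc.coe_one]
      have : ((b:ℝ) - 1) ≤ 0 := by rw [hbR]; linarith
      rw [abs_of_nonpos this, hbR]; norm_num
    set J : Set E := γ '' (Set.Icc a b) with hJdef
    have hJc : IsCompact J := isClosed_Icc.isCompact.image hγc
    set K' : Set (E × E) := Z ∩ Prod.snd ⁻¹' J with hK'def
    have hK'c : IsCompact K' := hZc.inter_right (hJc.isClosed.preimage continuous_snd)
    set Af : Set (E × E) := K' ∩ Prod.snd ⁻¹' ({γ a} : Set E) with hAfdef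
    set Bf : Set (E × E) := K' ∩ Prod.snd ⁻¹' ({γ b} : Set E) with hBfdef
    have hAfc : IsClosed Af := hK'c.isClosed.inter (isClosed_singleton.preimage continuous_snd)
    have hBfc : IsClosed Bf := hK'c.isClosed.inter (isClosed_singleton.preimage continuous_snd)
    rcases aux_wirecut_set hK'c hAfc hBfc inter_subset_left inter_subset_left with
      ⟨y, hyAf, w0, hw0C, hw0Bf⟩ | ⟨P, Q, hPc, hQc, hPQK, hPQd, hAfP, hBfQ⟩
    · -- the component of `K'` joining the faces is the desired continuum
      have hyK' : y ∈ K' := hyAf.1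
      set C : Set (E × E) := connectedComponentIn K' y with hCdef
      have hCc : IsCompact C := aux_isCompact_connectedComponentIn hK'c y
      have hCne : C.Nonempty := ⟨y, mem_connectedComponentIn hyK'⟩
      have hCpre : IsPreconnected C := isPreconnected_connectedComponentIn
      have hCK' : C ⊆ K' := connectedComponentIn_subset K' y
      have hCK : C ⊆ K := fun z hz => hZK (hCK' hz).1
      have hsnd : ∀ z ∈ C, ∃ s : unitInterval, a ≤ s ∧ s ≤ b ∧ γ s = z.2 := by
        intro z hz
        obtain ⟨-, s, hsmem, hs⟩ := hCK' hz
        exact ⟨s, hsmem.1, hsmem.2, hs⟩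
      have hy2 : y.2 = γ a := hyAf.2
      have hw02 : w0.2 = γ b := hw0Bf.2
      have hsurj : ∀ s : unitInterval, a ≤ s → s ≤ b → γ s ∈ Prod.snd '' C := by
        intro s has hsb
        refine aux_arc_subset hγc hγi (hCpre.image _ continuous_snd.continuousOn)
          ?_ ?_ ?_ has hsb
        · rintro p ⟨z, hz, rfl⟩
          obtain ⟨s', -, -, hs'⟩ := hsnd z hz
          exact ⟨s', hs'⟩
        · exact ⟨y, mem_connectedComponentIn hyK', hy2⟩
        · exact ⟨w0, hw0C, hw02⟩
      refine ⟨C, hCc, hCne, hCpre, ?_, ?_, ?_⟩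
      · intro z hz
        obtain ⟨s, has, hsb, hs⟩ := hsnd z hz
        have hzK := hCK hz
        have hz2ne0 : z.2 ≠ γ 0 := by
          rw [← hs]
          intro h
          have hs0 : s = 0 := hγi h
          rw [hs0] at has
          have : (a : ℝ) ≤ ((0:unitInterval) : ℝ) := Subtype.coe_le_coe.2 has
          rw [haR] at this
          simp only [Icc.coe_zero] at this
          linarith
        have hz2ne1 : z.2 ≠ γ 1 := by
          rw [← hs]
          intro h
          have hs1 : s = 1 := hγi h
          rw [hs1] at hsb
          have : ((1:unitInterval) : ℝ) ≤ (b : ℝ) := Subtype.coe_le_coe.2 hsb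
          rw [hbR] at this
          norm_num at this
          linarith
        by_contra hlt
        push_neg at hlt
        exact hzK.2 ⟨⟨hz2ne0, hz2ne1⟩, hlt⟩
      · intro z hz
        have hzY := (hCK hz).1
        rw [hYdef, mem_prod] at hzY
        exact hzY
      · intro yI hyI
        rw [← hIdef] at hyI
        obtain ⟨s, hs⟩ := hyI
        rcases le_total s a with hsa | has
        · obtain ⟨z, hz, hz2⟩ := hsurj a le_rfl haleb
          refine ⟨z, hz, ?_⟩
          have hds : dist s (0:unitInterval) < t1 := by
            rw [Subtype.dist_eq]
            have h1 : (s:ℝ) ≤ θ := by have := Subtype.coe_le_coe.2 hsa; rwa [haR] at this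
            have h2 : (0:ℝ) ≤ (s:ℝ) := s.2.1
            rw [Real.dist_eq]
            rw [abs_of_nonneg (by simpa using h2)]
            simp only [Icc.coe_zero, sub_zero]
            linarith
          have h1 : dist (γ s) (γ 0) < δ := ht1 s hds
          have h2 : dist (γ a) (γ 0) < δ := ht1 a (by rw [hdista]; exact hθt1)
          have : dist yI z.2 = dist (γ s) (γ a) := by rw [← hs, hz2]
          rw [this]
          calc dist (γ s) (γ a) ≤ dist (γ s) (γ 0) + dist (γ a) (γ 0) :=
                dist_triangle_right _ _ _
            _ < 2 * δ := by linarith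
        · rcases le_total s b with hsb | hbs
          · obtain ⟨z, hz, hz2⟩ := hsurj s has hsb
            refine ⟨z, hz, ?_⟩
            rw [← hs, hz2, dist_self]
            positivity
          · obtain ⟨z, hz, hz2⟩ := hsurj b haleb le_rfl
            refine ⟨z, hz, ?_⟩
            have hds : dist s (1:unitInterval) < t2 := by
              rw [Subtype.dist_eq]
              have h1 : 1 - θ ≤ (s:ℝ) := by have := Subtype.coe_le_coe.2 hbs; rwa [hbR] at this
              have h2 : (s:ℝ) ≤ 1 := s.2.2
              rw [Real.dist_eq]
              have h3 : (s:ℝ) - ((1:unitInterval):ℝ) ≤ 0 := by simp; linarith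
              rw [abs_of_nonpos h3]
              simp only [Icc.coe_one]
              linarith
            have h1 : dist (γ s) (γ 1) < δ := ht2 s hds
            have h2 : dist (γ b) (γ 1) < δ := ht2 b (by rw [hdistb]; exact hθt2)
            have : dist yI z.2 = dist (γ s) (γ b) := by rw [← hs, hz2]
            rw [this]
            calc dist (γ s) (γ b) ≤ dist (γ s) (γ 1) + dist (γ b) (γ 1) :=
                  dist_triangle_right _ _ _
              _ < 2 * δ := by linarith
    · -- otherwise `Z` would be disconnected
      exfalso
      have hPK' : P ⊆ K' := by rw [← hPQK]; exact subset_union_left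
      have hQK' : Q ⊆ K' := by rw [← hPQK]; exact subset_union_right
      set ZL : Set (E × E) := (Z ∩ Prod.snd ⁻¹' (γ '' Set.Icc 0 a)) ∪ P with hZLdef
      set ZR : Set (E × E) := (Z ∩ Prod.snd ⁻¹' (γ '' Set.Icc b 1)) ∪ Q with hZRdef
      have hL0c : IsCompact (γ '' Set.Icc 0 a) := isClosed_Icc.isCompact.image hγc
      have hR0c : IsCompact (γ '' Set.Icc b 1) := isClosed_Icc.isCompact.image hγc
      have hZLc : IsCompact ZL :=
        (hZc.inter_right (hL0c.isClosed.preimage continuous_snd)).union hPc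
      have hZRc : IsCompact ZR :=
        (hZc.inter_right (hR0c.isClosed.preimage continuous_snd)).union hQc
      have hcover : Z ⊆ ZL ∪ ZR := by
        intro z hz
        have hzY : z ∈ Y := (hZK hz).1
        rw [hYdef, mem_prod] at hzY
        have hz2I : z.2 ∈ I := hzY.2
        rw [← hIdef] at hz2I
        obtain ⟨s, hs⟩ := hz2I
        rcases le_total s a with hsa | has
        · exact Or.inl (Or.inl ⟨hz, ⟨s, ⟨unitInterval.nonneg', hsa⟩, hs⟩⟩)
        · rcases le_total s b with hsb | hbs
          · have hzK' : z ∈ K' := ⟨hz, ⟨s, ⟨has, hsb⟩, hs⟩⟩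
            rw [← hPQK] at hzK'
            exact hzK'.elim (fun h => Or.inl (Or.inr h)) fun h => Or.inr (Or.inr h)
          · exact Or.inr (Or.inl ⟨hz, ⟨s, ⟨hbs, unitInterval.le_one'⟩, hs⟩⟩)
      have hLRdisj : ZL ∩ ZR = ∅ := by
        rw [eq_empty_iff_forall_notMem]
        rintro z ⟨hzL, hzR⟩
        have hPQd' := eq_empty_iff_forall_notMem.1 hPQd
        rcases hzL with ⟨hzZ, hpre⟩ | hzP
        · obtain ⟨s, hsmem, hs⟩ := hpre
          rcases hzR with ⟨-, hpre'⟩ | hzQ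
          · obtain ⟨s', hsmem', hs'⟩ := hpre'
            have hss' : s = s' := hγi (hs.trans hs'.symm)
            have h1 : (s:ℝ) ≤ θ := by
              have := Subtype.coe_le_coe.2 hsmem.2; rwa [haR] at this
            have h2 : 1 - θ ≤ (s':ℝ) := by
              have := Subtype.coe_le_coe.2 hsmem'.1; rwa [hbR] at this
            rw [hss'] at h1
            linarith
          · have hzK' : z ∈ K' := hQK' hzQ
            obtain ⟨-, s', hsmem', hs'⟩ := hzK'
            have hss' : s = s' := hγi (hs.trans hs'.symm)
            have hsa : s = a := le_antisymm hsmem.2 (hss' ▸ hsmem'.1)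
            have hzAf : z ∈ Af := by
              refine ⟨hQK' hzQ, ?_⟩
              rw [mem_preimage, mem_singleton_iff, ← hs, hsa]
            exact hPQd' z ⟨hAfP hzAf, hzQ⟩
        · rcases hzR with ⟨-, hpre'⟩ | hzQ
          · obtain ⟨s, hsmem, hs⟩ := hpre'
            have hzK' : z ∈ K' := hPK' hzP
            obtain ⟨-, s', hsmem', hs'⟩ := hzK'
            have hss' : s = s' := hγi (hs.trans hs'.symm)
            have hsb : s = b := le_antisymm (hss' ▸ hsmem'.2) hsmem.1
            have hzBf : z ∈ Bf := by
              refine ⟨hPK' hzP, ?_⟩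
              rw [mem_preimage, mem_singleton_iff, ← hs, hsb]
            exact hPQd' z ⟨hzP, hBfQ hzBf⟩
          · exact hPQd' z ⟨hzP, hzQ⟩
      have hLRdisj' := eq_empty_iff_forall_notMem.1 hLRdisj
      have hx2 : x.2 = γ 0 := by
        rw [mem_prod, mem_singleton_iff] at hxA; exact hxA.2
      have hxZL : x ∈ ZL :=
        Or.inl ⟨hxZ, ⟨0, ⟨le_refl _, unitInterval.nonneg'⟩, hx2.symm⟩⟩
      have hz02 : z0.2 = γ 1 := by
        rw [mem_prod, mem_singleton_iff] at hz0B; exact hz0B.2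
      have hz0ZR : z0 ∈ ZR :=
        Or.inl ⟨hz0Z, ⟨1, ⟨unitInterval.le_one', le_refl _⟩, hz02.symm⟩⟩
      obtain ⟨w, hwZ, hw1, hw2⟩ := hZpre ZRᶜ ZLᶜ hZRc.isClosed.isOpen_compl
        hZLc.isClosed.isOpen_compl
        (fun z hz => by
          by_cases h : z ∈ ZR
          · exact Or.inr fun hL => hLRdisj' z ⟨hL, h⟩
          · exact Or.inl h)
        ⟨x, hxZ, fun hxR => hLRdisj' x ⟨hxZL, hxR⟩⟩
        ⟨z0, hz0Z, fun hzL => hLRdisj' z0 ⟨hzL, hz0ZR⟩⟩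
      rcases hcover hwZ with h | h
      exacts [hw2 h, hw1 h]
  · -- otherwise we could separate, contradiction
    exfalso
    apply hnsep
    have hdisj : Disjoint P Q := disjoint_iff_inter_eq_empty.2 hPQd
    obtain ⟨r, hr, hth⟩ := hdisj.exists_thickenings hPc hQc.isClosed
    refine ⟨(Y \ S) ∩ thickening r P, (Y \ S) ∩ thickening r Q, ?_, ?_, ?_, ?_,
      ⟨thickening r P, isOpen_thickening, rfl⟩, ⟨thickening r Q, isOpen_thickening, rfl⟩⟩
    · rw [← inter_union_distrib_left, inter_eq_left, hYS, ← hPQK]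
      exact union_subset_union (self_subset_thickening hr P) (self_subset_thickening hr Q)
    · rw [eq_empty_iff_forall_notMem]
      rintro z ⟨⟨-, hz1⟩, ⟨-, hz2⟩⟩
      exact Set.disjoint_left.mp hth hz1 hz2
    · intro p hp
      exact ⟨by rw [hYS]; exact hAK hp, self_subset_thickening hr P (hAP hp)⟩
    · intro p hp
      exact ⟨by rw [hYS]; exact hBK hp, self_subset_thickening hr Q (hBQ hp)⟩

end Construct


noncomputable local instance : MetricSpace (ℕ → unitInterval) := PiCountable.metricSpace

/-- span zero gives separators close to the continuum. -/
theorem stmt0 (X : Set (ℕ → unitInterval))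
    (hXc : IsCompact X) (hXconn : IsConnected X)
    (hspan : ∀ Z : Set ((ℕ → unitInterval) × (ℕ → unitInterval)),
      Z ⊆ X ×ˢ X → IsCompact Z → IsConnected Z →
      Prod.fst '' Z ⊆ Prod.snd '' Z → ∃ x, (x, x) ∈ Z) :
    ∀ ε > (0 : ℝ), ∃ δ > (0 : ℝ),
      ∀ (G I : Set (ℕ → unitInterval)) (γ : unitInterval → (ℕ → unitInterval)),
        IsGraphSet G →
        Continuous γ → Function.Injective γ → Set.range γ = I →
        Metric.hausdorffDist X G < δ → Metric.hausdorffDist X I < δ →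
        SeparatesWithin (G ×ˢ I)
          {p : (ℕ → unitInterval) × (ℕ → unitInterval) |
            p.1 ∈ G ∧ p.2 ∈ I \ {γ 0, γ 1} ∧ dist p.1 p.2 < ε}
          (G ×ˢ {γ 0}) (G ×ˢ {γ 1}) := by

  intro ε hε
  by_contra hcon
  push_neg at hcon
  have hXne : X.Nonempty := hXconn.nonempty
  have hXcl : IsClosed X := hXc.isClosed
  have hbdd := fun s : Set ((ℕ → unitInterval) × (ℕ → unitInterval)) =>
    isCompact_univ.isBounded.subset (subset_univ s)
  have hbdd1 := fun s : Set (ℕ → unitInterval) =>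
    isCompact_univ.isBounded.subset (subset_univ s)
  have key : ∀ n : ℕ, ∃ C : Set ((ℕ → unitInterval) × (ℕ → unitInterval)),
      IsCompact C ∧ C.Nonempty ∧ IsPreconnected C ∧
      (∀ z ∈ C, ε ≤ dist z.1 z.2) ∧
      (∀ z ∈ C, infDist z.1 X ≤ 1/((n:ℝ)+1) ∧ infDist z.2 X ≤ 1/((n:ℝ)+1)) ∧
      (∀ x ∈ X, infDist x (Prod.snd '' C) ≤ 3/((n:ℝ)+1)) := by
    intro n
    have hpos : (0:ℝ) < 1/((n:ℝ)+1) := by positivity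
    obtain ⟨G, I, γ, hG, hγc, hγi, hrange, hdG, hdI, hnsep⟩ := hcon (1/((n:ℝ)+1)) hpos
    have hGc : IsCompact G := by
      obtain ⟨m, f, hf, hGeq, -⟩ := hG
      rw [hGeq]
      exact isCompact_iUnion (fun i => isCompact_range (hf i).1)
    obtain ⟨C, hCc, hCne, hCpre, hCd, hCmem, hCapprox⟩ :=
      aux_construct hε hpos hGc hγc hγi hrange hnsep
    refine ⟨C, hCc, hCne, hCpre, hCd, ?_, ?_⟩
    · intro z hz
      obtain ⟨hz1, hz2⟩ := hCmem z hz
      have hfinG : EMetric.hausdorffEdist G X ≠ ⊤ :=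
        hausdorffEdist_ne_top_of_nonempty_of_bounded ⟨z.1, hz1⟩ hXne (hbdd1 _) (hbdd1 _)
      have hfinI : EMetric.hausdorffEdist I X ≠ ⊤ :=
        hausdorffEdist_ne_top_of_nonempty_of_bounded ⟨z.2, hz2⟩ hXne (hbdd1 _) (hbdd1 _)
      constructor
      · calc infDist z.1 X ≤ hausdorffDist G X := infDist_le_hausdorffDist_of_mem hz1 hfinG
          _ = hausdorffDist X G := hausdorffDist_comm
          _ ≤ 1/((n:ℝ)+1) := le_of_lt hdG
      · calc infDist z.2 X ≤ hausdorffDist I X := infDist_le_hausdorffDist_of_mem hz2 hfinI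
          _ = hausdorffDist X I := hausdorffDist_comm
          _ ≤ 1/((n:ℝ)+1) := le_of_lt hdI
    · intro x hx
      have hIne : I.Nonempty := ⟨γ 0, hrange ▸ mem_range_self 0⟩
      have hfinXI : EMetric.hausdorffEdist X I ≠ ⊤ :=
        hausdorffEdist_ne_top_of_nonempty_of_bounded hXne hIne (hbdd1 _) (hbdd1 _)
      have h1 : infDist x I < 1/((n:ℝ)+1) :=
        lt_of_le_of_lt (infDist_le_hausdorffDist_of_mem hx hfinXI) hdI
      obtain ⟨y, hyI, hxy⟩ := (infDist_lt_iff hIne).1 h1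
      obtain ⟨z, hzC, hyz⟩ := hCapprox y hyI
      calc infDist x (Prod.snd '' C) ≤ dist x z.2 :=
            infDist_le_dist_of_mem (mem_image_of_mem _ hzC)
        _ ≤ dist x y + dist y z.2 := dist_triangle _ _ _
        _ ≤ 1/((n:ℝ)+1) + 2*(1/((n:ℝ)+1)) := by linarith
        _ = 3/((n:ℝ)+1) := by ring
  choose Cs hCc hCne hCpre hCd hCclose hCapp using key
  set c : ℕ → TopologicalSpace.NonemptyCompacts ((ℕ → unitInterval) × (ℕ → unitInterval)) :=
    fun n => ⟨⟨Cs n, hCc n⟩, hCne n⟩ with hcdef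
  obtain ⟨L, -, φ, hφ, hφtend⟩ := isCompact_univ.tendsto_subseq (fun n => mem_univ (c n))
  have hcoe : ∀ k, ((c (φ k) : Set _)) = Cs (φ k) := fun k => rfl
  have hdist0 : Filter.Tendsto (fun k => hausdorffDist (Cs (φ k)) (L : Set ((ℕ → unitInterval) × (ℕ → unitInterval))))
      Filter.atTop (nhds 0) := by
    have h := tendsto_iff_dist_tendsto_zero.1 hφtend
    convert h using 2 with k
    try rw [NonemptyCompacts.dist_eq]
    rfl
  have hfin : ∀ k, EMetric.hausdorffEdist (Cs (φ k)) (L : Set ((ℕ → unitInterval) × (ℕ → unitInterval))) ≠ ⊤ := fun k =>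
    hausdorffEdist_ne_top_of_nonempty_of_bounded (hCne _) L.nonempty (hbdd _) (hbdd _)
  have hfin' : ∀ k, EMetric.hausdorffEdist (L : Set ((ℕ → unitInterval) × (ℕ → unitInterval))) (Cs (φ k)) ≠ ⊤ := fun k => by
    convert hfin k using 1; exact EMetric.hausdorffEdist_comm
  have hseq : Filter.Tendsto (fun k : ℕ => 1/((φ k:ℝ)+1)) Filter.atTop (nhds 0) := by
    apply squeeze_zero (fun k => by positivity) (fun k => ?_)
      tendsto_one_div_add_atTop_nhds_zero_nat
    apply one_div_le_one_div_of_le (by positivity)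
    have : (k:ℝ) ≤ (φ k : ℝ) := by exact_mod_cast hφ.le_apply
    linarith
  have hmemX : ∀ z ∈ (L : Set ((ℕ → unitInterval) × (ℕ → unitInterval))), z.1 ∈ X ∧ z.2 ∈ X := by
    intro z hz
    have happrox : ∀ k, ∃ w ∈ Cs (φ k),
        dist z w ≤ hausdorffDist (Cs (φ k)) (L : Set ((ℕ → unitInterval) × (ℕ → unitInterval))) := by
      intro k
      have h1 : infDist z (Cs (φ k)) ≤ hausdorffDist (L : Set ((ℕ → unitInterval) × (ℕ → unitInterval))) (Cs (φ k)) :=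
        infDist_le_hausdorffDist_of_mem hz (hfin' k)
      obtain ⟨w, hw, hweq⟩ := (hCc (φ k)).exists_infDist_eq_dist (hCne (φ k)) z
      refine ⟨w, hw, ?_⟩
      rw [← hweq]
      calc infDist z (Cs (φ k)) ≤ hausdorffDist (L : Set ((ℕ → unitInterval) × (ℕ → unitInterval))) (Cs (φ k)) := h1
        _ = hausdorffDist (Cs (φ k)) (L : Set ((ℕ → unitInterval) × (ℕ → unitInterval))) := hausdorffDist_comm
    have hgen : ∀ (pr : (ℕ → unitInterval) × (ℕ → unitInterval) → (ℕ → unitInterval)),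
        (∀ u v, dist (pr u) (pr v) ≤ dist u v) →
        (∀ k, ∀ w ∈ Cs (φ k), infDist (pr w) X ≤ 1/((φ k:ℝ)+1)) → pr z ∈ X := by
      intro pr hpr hclose
      rw [hXcl.mem_iff_infDist_zero hXne]
      refine le_antisymm ?_ infDist_nonneg
      refine ge_of_tendsto' (x := Filter.atTop) (f := fun k =>
        hausdorffDist (Cs (φ k)) (L : Set ((ℕ → unitInterval) × (ℕ → unitInterval))) + 1/((φ k:ℝ)+1)) ?_ ?_
      · have := hdist0.add hseq
        simpa using this
      · intro k
        obtain ⟨w, hwC, hwd⟩ := happrox k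
        calc infDist (pr z) X ≤ infDist (pr w) X + dist (pr z) (pr w) :=
              infDist_le_infDist_add_dist
          _ ≤ 1/((φ k:ℝ)+1) + dist z w := add_le_add (hclose k w hwC) (hpr z w)
          _ ≤ hausdorffDist (Cs (φ k)) (L : Set ((ℕ → unitInterval) × (ℕ → unitInterval))) + 1/((φ k:ℝ)+1) := by linarith
    constructor
    · exact hgen Prod.fst (fun u v => by rw [Prod.dist_eq]; exact le_max_left _ _)
        (fun k w hw => (hCclose (φ k) w hw).1)
    · exact hgen Prod.snd (fun u v => by rw [Prod.dist_eq]; exact le_max_right _ _)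
        (fun k w hw => (hCclose (φ k) w hw).2)
  have hXsub : X ⊆ Prod.snd '' (L : Set ((ℕ → unitInterval) × (ℕ → unitInterval))) := by
    intro x hx
    have himgc : IsCompact (Prod.snd '' (L : Set ((ℕ → unitInterval) × (ℕ → unitInterval)))) := L.isCompact.image continuous_snd
    have himgne : (Prod.snd '' (L : Set ((ℕ → unitInterval) × (ℕ → unitInterval)))).Nonempty := L.nonempty.image _
    rw [himgc.isClosed.mem_iff_infDist_zero himgne]
    refine le_antisymm ?_ infDist_nonneg
    have hseq3 : Filter.Tendsto (fun k : ℕ => 3/((φ k:ℝ)+1)) Filter.atTop (nhds 0) := by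
      have := hseq.const_mul (3:ℝ)
      simpa [mul_one_div, div_eq_mul_inv] using this
    refine ge_of_tendsto' (x := Filter.atTop) (f := fun k =>
      3/((φ k:ℝ)+1) + hausdorffDist (Cs (φ k)) (L : Set ((ℕ → unitInterval) × (ℕ → unitInterval)))) ?_ ?_
    · have := hseq3.add hdist0
      simpa using this
    · intro k
      have hfin2 : EMetric.hausdorffEdist (Prod.snd '' Cs (φ k))
          (Prod.snd '' (L : Set ((ℕ → unitInterval) × (ℕ → unitInterval)))) ≠ ⊤ :=
        hausdorffEdist_ne_top_of_nonempty_of_bounded ((hCne _).image _)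
          (L.nonempty.image _) (hbdd1 _) (hbdd1 _)
      calc infDist x (Prod.snd '' (L : Set ((ℕ → unitInterval) × (ℕ → unitInterval))))
          ≤ infDist x (Prod.snd '' Cs (φ k)) +
            hausdorffDist (Prod.snd '' Cs (φ k)) (Prod.snd '' (L : Set ((ℕ → unitInterval) × (ℕ → unitInterval)))) :=
            infDist_le_infDist_add_hausdorffDist hfin2
        _ ≤ 3/((φ k:ℝ)+1) + hausdorffDist (Cs (φ k)) (L : Set ((ℕ → unitInterval) × (ℕ → unitInterval))) :=
            add_le_add (hCapp (φ k) x hx)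
              (aux_hausdorffDist_image_le
                (fun u v => by rw [Prod.dist_eq]; exact le_max_right _ _)
                (hCc _) L.isCompact (hCne _) L.nonempty (hfin k))
  have hLpre : IsPreconnected (L : Set ((ℕ → unitInterval) × (ℕ → unitInterval))) := by
    apply aux_preconn_limit (K := fun k => Cs (φ k)) (fun k => hCc _) (fun k => hCne _)
      (fun k => hCpre _) L.isCompact L.nonempty hfin
    intro r hr
    exact (hdist0.eventually (gt_mem_nhds hr)).exists
  have hsub : (L : Set ((ℕ → unitInterval) × (ℕ → unitInterval))) ⊆ X ×ˢ X := fun z hz =>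
    mem_prod.2 ⟨(hmemX z hz).1, (hmemX z hz).2⟩
  have hproj : Prod.fst '' (L : Set ((ℕ → unitInterval) × (ℕ → unitInterval))) ⊆ Prod.snd '' (L : Set ((ℕ → unitInterval) × (ℕ → unitInterval))) := by
    rintro y ⟨z, hz, rfl⟩
    exact hXsub (hmemX z hz).1
  obtain ⟨x0, hx0⟩ := hspan (L : Set ((ℕ → unitInterval) × (ℕ → unitInterval))) hsub L.isCompact ⟨L.nonempty, hLpre⟩ hproj
  obtain ⟨k, hk⟩ := (hdist0.eventually (gt_mem_nhds (half_pos hε))).exists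
  have h1 : infDist (x0, x0) (Cs (φ k)) < ε/2 := by
    calc infDist (x0, x0) (Cs (φ k)) ≤ hausdorffDist (L : Set ((ℕ → unitInterval) × (ℕ → unitInterval))) (Cs (φ k)) :=
          infDist_le_hausdorffDist_of_mem hx0 (hfin' k)
      _ = hausdorffDist (Cs (φ k)) (L : Set ((ℕ → unitInterval) × (ℕ → unitInterval))) := hausdorffDist_comm
      _ < ε/2 := hk
  obtain ⟨w, hwC, hwd⟩ := (infDist_lt_iff (hCne (φ k))).1 h1
  rw [dist_comm] at hwd
  have hεw := hCd (φ k) w hwC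
  have ha : dist w.1 x0 ≤ dist w (x0, x0) := by rw [Prod.dist_eq]; exact le_max_left _ _
  have hb2 : dist w.2 x0 ≤ dist w (x0, x0) := by rw [Prod.dist_eq]; exact le_max_right _ _
  have htri : dist w.1 w.2 ≤ dist w.1 x0 + dist x0 w.2 := dist_triangle _ _ _
  rw [dist_comm x0 w.2] at htri
  linarith
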